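/- Let S be a CPTP map on M_d admitting a Doeblin minorization: there exist ε ∈ (0,1] and a density matrix τ such that S(X) ≥ ε·tr(X)·τ in the Loewner order for all positive semidefinite X. Then κ_tr(S) ≤ 1 − ε. -/

import Mathlib

open Matrix
open scoped ComplexOrder

namespace TD

variable {d : ℕ}

noncomputable def trNorm (A : Matrix (Fin d) (Fin d) ℂ) : ℝ :=
  (((Matrix.posSemidef_conjTranspose_mul_self A).1.eigenvectorUnitary.1 *
      diagonal (((↑) : ℝ → ℂ) ∘ (Real.sqrt ∘ (Matrix.posSemidef_conjTranspose_mul_self A).1.eigenvalues)) *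
      (star (Matrix.posSemidef_conjTranspose_mul_self A).1.eigenvectorUnitary :
        Matrix (Fin d) (Fin d) ℂ)).trace).re


noncomputable def hsNorm (A : Matrix (Fin d) (Fin d) ℂ) : ℝ :=
  Real.sqrt ((Aᴴ * A).trace.re)

def Density (ρ : Matrix (Fin d) (Fin d) ℂ) : Prop :=
  ρ.PosSemidef ∧ ρ.trace = 1

def PosMap (T : Matrix (Fin d) (Fin d) ℂ →ₗ[ℂ] Matrix (Fin d) (Fin d) ℂ) : Prop :=
  ∀ A, A.PosSemidef → (T A).PosSemidef

def TrPres (T : Matrix (Fin d) (Fin d) ℂ →ₗ[ℂ] Matrix (Fin d) (Fin d) ℂ) : Prop :=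
  ∀ A, (T A).trace = A.trace

noncomputable def kappaTr (T : Matrix (Fin d) (Fin d) ℂ →ₗ[ℂ] Matrix (Fin d) (Fin d) ℂ) : ℝ :=
  ⨆ X : {X : Matrix (Fin d) (Fin d) ℂ // X.IsHermitian ∧ X.trace = 0 ∧ X ≠ 0},
    trNorm (T X.1) / trNorm X.1

noncomputable def opNorm1 (L : Matrix (Fin d) (Fin d) ℂ →ₗ[ℂ] Matrix (Fin d) (Fin d) ℂ) : ℝ :=
  ⨆ X : {X : Matrix (Fin d) (Fin d) ℂ // X ≠ 0}, trNorm (L X.1) / trNorm X.1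

noncomputable def s0 (T : Matrix (Fin d) (Fin d) ℂ →ₗ[ℂ] Matrix (Fin d) (Fin d) ℂ) : ℝ :=
  ⨆ X : {X : Matrix (Fin d) (Fin d) ℂ // X.trace = 0 ∧ X ≠ 0},
    hsNorm (T X.1) / hsNorm X.1

noncomputable def choi (T : Matrix (Fin d) (Fin d) ℂ →ₗ[ℂ] Matrix (Fin d) (Fin d) ℂ) :
    Matrix (Fin d × Fin d) (Fin d × Fin d) ℂ :=
  Matrix.of fun p q => T (Matrix.single p.1 q.1 1) p.2 q.2

def CP (T : Matrix (Fin d) (Fin d) ℂ →ₗ[ℂ] Matrix (Fin d) (Fin d) ℂ) : Prop :=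
  (choi T).PosSemidef

noncomputable def replaceChan (τ : Matrix (Fin d) (Fin d) ℂ) :
    Matrix (Fin d) (Fin d) ℂ →ₗ[ℂ] Matrix (Fin d) (Fin d) ℂ where
  toFun X := X.trace • τ
  map_add' X Y := by simp [Matrix.trace_add, add_smul]
  map_smul' c X := by simp [Matrix.trace_smul, smul_smul]

noncomputable def prodComp {n : ℕ} (T : Fin n → (Matrix (Fin d) (Fin d) ℂ →ₗ[ℂ] Matrix (Fin d) (Fin d) ℂ)) :
    Matrix (Fin d) (Fin d) ℂ →ₗ[ℂ] Matrix (Fin d) (Fin d) ℂ :=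
  (List.ofFn T).foldl (fun acc f => f ∘ₗ acc) LinearMap.id

noncomputable def lpow (T : Matrix (Fin d) (Fin d) ℂ →ₗ[ℂ] Matrix (Fin d) (Fin d) ℂ) :
    ℕ → (Matrix (Fin d) (Fin d) ℂ →ₗ[ℂ] Matrix (Fin d) (Fin d) ℂ)
  | 0 => LinearMap.id
  | n + 1 => T ∘ₗ lpow T n

noncomputable def conjPair (K0 K1 : Matrix (Fin 2) (Fin 2) ℂ) :
    Matrix (Fin 2) (Fin 2) ℂ →ₗ[ℂ] Matrix (Fin 2) (Fin 2) ℂ where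
  toFun X := K0 * X * K0ᴴ + K1 * X * K1ᴴ
  map_add' X Y := by
    simp only [Matrix.mul_add, Matrix.add_mul]
    abel
  map_smul' c X := by
    simp [Matrix.mul_smul, Matrix.smul_mul, smul_add]

end TD

namespace TDAux

variable {d : ℕ}

noncomputable def Mf {M : Matrix (Fin d) (Fin d) ℂ} (hM : M.IsHermitian) (f : ℝ → ℝ) :
    Matrix (Fin d) (Fin d) ℂ :=
  (hM.eigenvectorUnitary : Matrix (Fin d) (Fin d) ℂ) *
    (Matrix.diagonal fun i => ((f (hM.eigenvalues i) : ℝ) : ℂ)) *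
    star (hM.eigenvectorUnitary : Matrix (Fin d) (Fin d) ℂ)

variable {M : Matrix (Fin d) (Fin d) ℂ} (hM : M.IsHermitian) (f g : ℝ → ℝ)

lemma Mf_mul : Mf hM f * Mf hM g = Mf hM (fun t => f t * g t) := by
  set U := (hM.eigenvectorUnitary : Matrix (Fin d) (Fin d) ℂ)
  have hsU : star U * U = 1 := Unitary.coe_star_mul_self hM.eigenvectorUnitary
  simp only [Mf, Matrix.mul_assoc]
  rw [← Matrix.mul_assoc (star U) U, hsU, Matrix.one_mul,
    ← Matrix.mul_assoc (Matrix.diagonal _) (Matrix.diagonal _), Matrix.diagonal_mul_diagonal]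
  push_cast
  rfl

lemma Mf_sub : Mf hM f - Mf hM g = Mf hM (fun t => f t - g t) := by
  simp only [Mf]
  rw [← Matrix.sub_mul, ← Matrix.mul_sub, Matrix.diagonal_sub]
  congr 2 with i
  push_cast
  rfl

lemma Mf_id : Mf hM (fun t => t) = M := by
  conv_rhs => rw [hM.spectral_theorem]
  rfl

lemma Mf_one : Mf hM (fun _ => 1) = 1 := by
  have hU : (hM.eigenvectorUnitary : Matrix (Fin d) (Fin d) ℂ) *
      star (hM.eigenvectorUnitary : Matrix (Fin d) (Fin d) ℂ) = 1 :=
    Unitary.coe_mul_star_self hM.eigenvectorUnitary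
  simp only [Mf, Complex.ofReal_one, Matrix.diagonal_one, Matrix.mul_one, hU]

lemma Mf_conjTranspose : (Mf hM f)ᴴ = Mf hM f := by
  have hstar : (star fun i => ((f (hM.eigenvalues i) : ℝ) : ℂ)) = fun i => ((f (hM.eigenvalues i) : ℝ) : ℂ) := by
    funext i
    simp [Complex.conj_ofReal]
  simp only [Mf, Matrix.star_eq_conjTranspose, Matrix.conjTranspose_mul,
    Matrix.conjTranspose_conjTranspose, Matrix.diagonal_conjTranspose, Matrix.mul_assoc, hstar]

lemma Mf_posSemidef (hf : ∀ t, 0 ≤ f t) : (Mf hM f).PosSemidef := by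
  have hD : (Matrix.diagonal fun i => ((f (hM.eigenvalues i) : ℝ) : ℂ)).PosSemidef :=
    Matrix.posSemidef_diagonal_iff.mpr fun i => Complex.zero_le_real.mpr (hf _)
  have := hD.mul_mul_conjTranspose_same (hM.eigenvectorUnitary : Matrix (Fin d) (Fin d) ℂ)
  rwa [← Matrix.star_eq_conjTranspose] at this

lemma Mf_trace : (Mf hM f).trace = ((∑ i, f (hM.eigenvalues i) : ℝ) : ℂ) := by
  have hsU : star (hM.eigenvectorUnitary : Matrix (Fin d) (Fin d) ℂ) *
      (hM.eigenvectorUnitary : Matrix (Fin d) (Fin d) ℂ) = 1 :=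
    Unitary.coe_star_mul_self hM.eigenvectorUnitary
  rw [Mf, Matrix.trace_mul_cycle, hsU, Matrix.one_mul, Matrix.trace_diagonal]
  push_cast
  rfl

lemma Mf_conj : Mf hM f * M * Mf hM g = Mf hM (fun t => f t * t * g t) := by
  set U := (hM.eigenvectorUnitary : Matrix (Fin d) (Fin d) ℂ) with hU
  have hdiag : star U * M * U = Matrix.diagonal (RCLike.ofReal ∘ hM.eigenvalues) :=
    by have := hM.conjStarAlgAut_star_eigenvectorUnitary; simpa [Unitary.conjStarAlgAut_apply] using this
  simp only [Mf, Matrix.mul_assoc]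
  have key : star U * (M * (U * ((Matrix.diagonal fun i => ((g (hM.eigenvalues i) : ℝ) : ℂ)) * star U)))
      = Matrix.diagonal (RCLike.ofReal ∘ hM.eigenvalues) *
        ((Matrix.diagonal fun i => ((g (hM.eigenvalues i) : ℝ) : ℂ)) * star U) := by
    rw [← Matrix.mul_assoc, ← Matrix.mul_assoc, hdiag]
  rw [key, ← Matrix.mul_assoc (Matrix.diagonal (RCLike.ofReal ∘ hM.eigenvalues)),
    Matrix.diagonal_mul_diagonal,
    ← Matrix.mul_assoc (Matrix.diagonal fun i => ((f (hM.eigenvalues i) : ℝ) : ℂ)),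
    Matrix.diagonal_mul_diagonal]
  push_cast
  congr 2
  funext i
  simp [Function.comp, mul_assoc]

lemma psd_trace_re_nonneg {A : Matrix (Fin d) (Fin d) ℂ} (hA : A.PosSemidef) :
    0 ≤ A.trace.re := by
  have h : ∀ i, 0 ≤ A i i := fun i => hA.diag_nonneg
  rw [Matrix.trace, Complex.re_sum]
  exact Finset.sum_nonneg fun i _ => ((Complex.le_def.mp (h i)).1 : _)

open scoped MatrixOrder in
lemma trNorm_eq_of_sq {A R : Matrix (Fin d) (Fin d) ℂ} (hR : R.PosSemidef)
    (h : R ^ 2 = Aᴴ * A) : TD.trNorm A = R.trace.re := by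
  have hH := (Matrix.posSemidef_conjTranspose_mul_self A).1
  have e1 : TD.trNorm A = (hH.cfc Real.sqrt).trace.re := by
    rw [TD.trNorm, Matrix.IsHermitian.cfc, Unitary.conjStarAlgAut_apply]; rfl
  rw [e1, ← hH.cfc_eq, ← cfcₙ_eq_cfc (hf0 := by simp), ← CFC.sqrt_eq_real_sqrt (Aᴴ * A)
    (Matrix.posSemidef_conjTranspose_mul_self A).nonneg,
    CFC.sqrt_unique (by rw [← pow_two]; exact h) hR.nonneg]

lemma trNorm_herm : TD.trNorm M = ∑ i, |hM.eigenvalues i| := by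
  have hps : (Mf hM fun t => |t|).PosSemidef := Mf_posSemidef hM _ fun t => abs_nonneg t
  have hsq : (Mf hM fun t => |t|) ^ 2 = Mᴴ * M := by
    rw [pow_two, Mf_mul, hM.eq,
      show (fun t : ℝ => |t| * |t|) = fun t : ℝ => t * t from funext fun t => abs_mul_abs_self t]
    conv_rhs => rw [← Mf_id hM]
    rw [Mf_mul]
  rw [trNorm_eq_of_sq hps hsq, Mf_trace]
  simp

lemma trNorm_pos {X : Matrix (Fin d) (Fin d) ℂ} (hX : X.IsHermitian) (hne : X ≠ 0) :
    0 < TD.trNorm X := by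
  rw [trNorm_herm hX]
  rcases (Finset.sum_nonneg fun i (_ : i ∈ Finset.univ) => abs_nonneg (hX.eigenvalues i)).lt_or_eq
    with h | h
  · exact h
  exfalso
  apply hne
  have h0 : ∀ i, hX.eigenvalues i = 0 := by
    intro i
    have := (Finset.sum_eq_zero_iff_of_nonneg
      (fun i _ => abs_nonneg (hX.eigenvalues i))).mp h.symm i (Finset.mem_univ i)
    exact abs_eq_zero.mp this
  have hdz : (Matrix.diagonal fun i => ((hX.eigenvalues i : ℝ) : ℂ)) = 0 := by
    rw [show (fun i => ((hX.eigenvalues i : ℝ) : ℂ)) = fun _ => (0 : ℂ) from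
      funext fun i => by rw [h0 i]; simp]
    exact Matrix.diagonal_zero
  calc X = Mf hX (fun t => t) := (Mf_id hX).symm
    _ = 0 := by rw [Mf, hdz, Matrix.mul_zero, Matrix.zero_mul]

lemma proj_trace_split {A Q : Matrix (Fin d) (Fin d) ℂ} (hQ : Q * Q = Q) :
    A.trace = (Q * A * Q).trace + ((1 - Q) * A * (1 - Q)).trace := by
  have h1 : (1 - Q) * A * (1 - Q) = A - Q * A - A * Q + Q * A * Q := by
    simp only [Matrix.sub_mul, Matrix.mul_sub, Matrix.one_mul, Matrix.mul_one]
    abel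
  have h2 : (Q * A * Q).trace = (A * Q).trace := by
    rw [Matrix.trace_mul_cycle, hQ, Matrix.trace_mul_comm]
  have h3 : (Q * A).trace = (A * Q).trace := Matrix.trace_mul_comm _ _
  rw [h1]
  simp only [Matrix.trace_add, Matrix.trace_sub, h2, h3]
  ring

lemma proj_trace_le {A Q : Matrix (Fin d) (Fin d) ℂ} (hA : A.PosSemidef)
    (hQ : Q * Q = Q) (hQh : Qᴴ = Q) : (Q * A * Q).trace.re ≤ A.trace.re := by
  have h1 : ((1 - Q) * A * (1 - Q)).PosSemidef := by
    have := hA.mul_mul_conjTranspose_same (1 - Q)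
    rwa [Matrix.conjTranspose_sub, Matrix.conjTranspose_one, hQh] at this
  have hre : A.trace.re = (Q * A * Q).trace.re + ((1 - Q) * A * (1 - Q)).trace.re := by
    rw [proj_trace_split (A := A) hQ, Complex.add_re]
  linarith [psd_trace_re_nonneg h1]

lemma proj_trace_nonneg {A Q : Matrix (Fin d) (Fin d) ℂ} (hA : A.PosSemidef)
    (hQh : Qᴴ = Q) : 0 ≤ (Q * A * Q).trace.re := by
  have := hA.mul_mul_conjTranspose_same Q
  rw [hQh] at this
  exact psd_trace_re_nonneg this

lemma trNorm_sub_le {A B : Matrix (Fin d) (Fin d) ℂ} (hA : A.PosSemidef) (hB : B.PosSemidef) :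
    TD.trNorm (A - B) ≤ A.trace.re + B.trace.re := by
  have hMh : (A - B).IsHermitian := hA.1.sub hB.1
  set χ : ℝ → ℝ := fun t => if 0 ≤ t then 1 else 0 with hχ
  have hQQ : Mf hMh χ * Mf hMh χ = Mf hMh χ := by
    rw [Mf_mul, show (fun t => χ t * χ t) = χ from funext fun t => by
      by_cases h : 0 ≤ t <;> simp [hχ, h]]
  have hQh : (Mf hMh χ)ᴴ = Mf hMh χ := Mf_conjTranspose hMh χ
  have hQ' : (1 : Matrix (Fin d) (Fin d) ℂ) - Mf hMh χ = Mf hMh (fun t => 1 - χ t) := by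
    rw [← Mf_sub hMh, Mf_one]
  have hQMQ : Mf hMh χ * (A - B) * Mf hMh χ = Mf hMh (fun t => max t 0) := by
    rw [Mf_conj, show (fun t => χ t * t * χ t) = fun t : ℝ => max t 0 from funext fun t => by
      by_cases h : 0 ≤ t
      · simp [hχ, h, max_eq_left h]
      · simp [hχ, h, max_eq_right (le_of_not_ge h)]]
  have hQ'MQ' : (1 - Mf hMh χ) * (A - B) * (1 - Mf hMh χ) = Mf hMh (fun t => min t 0) := by
    rw [hQ', Mf_conj, show (fun t => (1 - χ t) * t * (1 - χ t)) = fun t : ℝ => min t 0 from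
      funext fun t => by
        by_cases h : 0 ≤ t
        · simp [hχ, h, min_eq_right h]
        · simp [hχ, h, min_eq_left (le_of_not_ge h)]]
  have hp : (Mf hMh χ * (A - B) * Mf hMh χ).trace.re = ∑ i, max (hMh.eigenvalues i) 0 := by
    rw [hQMQ, Mf_trace]
    simp
  have hm : ((1 - Mf hMh χ) * (A - B) * (1 - Mf hMh χ)).trace.re
      = ∑ i, min (hMh.eigenvalues i) 0 := by
    rw [hQ'MQ', Mf_trace]
    simp
  have hQ'h : ((1 : Matrix (Fin d) (Fin d) ℂ) - Mf hMh χ)ᴴ = 1 - Mf hMh χ := by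
    rw [Matrix.conjTranspose_sub, Matrix.conjTranspose_one, hQh]
  have hQ'Q' : ((1 : Matrix (Fin d) (Fin d) ℂ) - Mf hMh χ) * (1 - Mf hMh χ) = 1 - Mf hMh χ := by
    simp only [Matrix.sub_mul, Matrix.mul_sub, Matrix.one_mul, Matrix.mul_one, hQQ]
    abel
  have hsplitQ : (Mf hMh χ * (A - B) * Mf hMh χ).trace.re
      = (Mf hMh χ * A * Mf hMh χ).trace.re - (Mf hMh χ * B * Mf hMh χ).trace.re := by
    have : Mf hMh χ * (A - B) * Mf hMh χ
        = Mf hMh χ * A * Mf hMh χ - Mf hMh χ * B * Mf hMh χ := by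
      noncomm_ring
    rw [this, Matrix.trace_sub, Complex.sub_re]
  have hsplitQ' : ((1 - Mf hMh χ) * (A - B) * (1 - Mf hMh χ)).trace.re
      = ((1 - Mf hMh χ) * A * (1 - Mf hMh χ)).trace.re
        - ((1 - Mf hMh χ) * B * (1 - Mf hMh χ)).trace.re := by
    have : (1 - Mf hMh χ) * (A - B) * (1 - Mf hMh χ)
        = (1 - Mf hMh χ) * A * (1 - Mf hMh χ) - (1 - Mf hMh χ) * B * (1 - Mf hMh χ) := by
      noncomm_ring
    rw [this, Matrix.trace_sub, Complex.sub_re]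
  have h1 : (∑ i, max (hMh.eigenvalues i) 0) ≤ A.trace.re := by
    rw [← hp, hsplitQ]
    have h1a := proj_trace_le hA hQQ hQh
    have h1b := proj_trace_nonneg hB hQh
    linarith
  have h2 : -(B.trace.re) ≤ ∑ i, min (hMh.eigenvalues i) 0 := by
    rw [← hm, hsplitQ']
    have h2a := proj_trace_le hB hQ'Q' hQ'h
    have h2b := proj_trace_nonneg hA hQ'h
    linarith
  have habs : TD.trNorm (A - B)
      = (∑ i, max (hMh.eigenvalues i) 0) - ∑ i, min (hMh.eigenvalues i) 0 := by
    rw [trNorm_herm hMh, ← Finset.sum_sub_distrib]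
    refine Finset.sum_congr rfl fun i _ => ?_
    rcases le_total 0 (hMh.eigenvalues i) with h | h
    · rw [abs_of_nonneg h, max_eq_left h, min_eq_right h, sub_zero]
    · rw [abs_of_nonpos h, max_eq_right h, min_eq_left h, zero_sub]
  rw [habs]
  linarith

end TDAux


theorem stmt10 {d : ℕ} (hd : 2 ≤ d)
    (S : Matrix (Fin d) (Fin d) ℂ →ₗ[ℂ] Matrix (Fin d) (Fin d) ℂ)
    (hcp : TD.CP S) (htr : TD.TrPres S)
    (ε : ℝ) (hε : 0 < ε ∧ ε ≤ 1) (τ : Matrix (Fin d) (Fin d) ℂ) (hτ : TD.Density τ)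
    (hmin : ∀ X : Matrix (Fin d) (Fin d) ℂ, X.PosSemidef →
      (S X - ((ε : ℂ) * X.trace) • τ).PosSemidef) :
    TD.kappaTr S ≤ 1 - ε := by
  obtain ⟨hε0, hε1⟩ := hε
  have h1ε : (0 : ℝ) ≤ 1 - ε := by linarith
  refine Real.iSup_le ?_ h1ε
  rintro ⟨X, hXh, hXtr, hXne⟩
  simp only
  set P := TDAux.Mf hXh (fun t => max t 0) with hPdef
  set N := TDAux.Mf hXh (fun t => max (-t) 0) with hNdef
  have hPsd : P.PosSemidef := TDAux.Mf_posSemidef hXh _ fun t => le_max_right _ _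
  have hNsd : N.PosSemidef := TDAux.Mf_posSemidef hXh _ fun t => le_max_right _ _
  have hXPN : X = P - N := by
    have : P - N = X := by
      rw [hPdef, hNdef, TDAux.Mf_sub hXh,
        show (fun t => max t 0 - max (-t) 0) = fun t : ℝ => t from funext fun t => by
          rcases le_total 0 t with h | h
          · rw [max_eq_left h, max_eq_right (by linarith : -t ≤ 0), sub_zero]
          · rw [max_eq_right h, max_eq_left (by linarith : 0 ≤ -t)]; ring,
        TDAux.Mf_id hXh]
    exact this.symm
  set p : ℝ := ∑ i, max (hXh.eigenvalues i) 0 with hpdef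
  set n : ℝ := ∑ i, max (-(hXh.eigenvalues i)) 0 with hndef
  have hPt : P.trace = (p : ℂ) := TDAux.Mf_trace hXh _
  have hNt : N.trace = (n : ℂ) := TDAux.Mf_trace hXh _
  have hpn : p = n := by
    have h0 : (p : ℂ) - (n : ℂ) = 0 := by
      rw [← hPt, ← hNt, ← Matrix.trace_sub, ← hXPN, hXtr]
    have : ((p - n : ℝ) : ℂ) = 0 := by push_cast; linear_combination h0
    exact sub_eq_zero.mp (by exact_mod_cast this)
  have htrX : TD.trNorm X = p + n := by
    rw [TDAux.trNorm_herm hXh, hpdef, hndef, ← Finset.sum_add_distrib]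
    refine Finset.sum_congr rfl fun i _ => ?_
    rcases le_total 0 (hXh.eigenvalues i) with h | h
    · rw [abs_of_nonneg h, max_eq_left h, max_eq_right (by linarith : -(hXh.eigenvalues i) ≤ 0),
        add_zero]
    · rw [abs_of_nonpos h, max_eq_right h, max_eq_left (by linarith : 0 ≤ -(hXh.eigenvalues i)),
        zero_add]
  have hApsd := hmin P hPsd
  have hBpsd := hmin N hNsd
  have hSX : S X = (S P - ((ε : ℂ) * P.trace) • τ) - (S N - ((ε : ℂ) * N.trace) • τ) := by
    have hsm : ((ε : ℂ) * P.trace) • τ = ((ε : ℂ) * N.trace) • τ := by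
      rw [hPt, hNt, hpn]
    rw [hXPN, map_sub, hsm]
    abel
  have htrτ : τ.trace = 1 := hτ.2
  have htrA : (S P - ((ε : ℂ) * P.trace) • τ).trace = (((1 - ε) * p : ℝ) : ℂ) := by
    rw [Matrix.trace_sub, Matrix.trace_smul, htr P, hPt, htrτ]
    push_cast [smul_eq_mul]
    ring
  have htrB : (S N - ((ε : ℂ) * N.trace) • τ).trace = (((1 - ε) * n : ℝ) : ℂ) := by
    rw [Matrix.trace_sub, Matrix.trace_smul, htr N, hNt, htrτ]
    push_cast [smul_eq_mul]
    ring
  have hkey := TDAux.trNorm_sub_le hApsd hBpsd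
  rw [← hSX, htrA, htrB, Complex.ofReal_re, Complex.ofReal_re] at hkey
  rw [div_le_iff₀ (TDAux.trNorm_pos hXh hXne), htrX]
  nlinarith [hkey]
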